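/- Let q = p^m and let e be a positive divisor of q−1. Set e' = gcd((q−1)/(p−1), e). Then for any 0 ≤ i < e, the multiset { x y : y ∈ F_p^*, x ∈ C_i^{(e,q)} } equals the multiset in which each element of C_i^{(e',q)} appears with multiplicity (p−1)·e'/e. -/

import Mathlib

open scoped Classical

/-- The `i`-th cyclotomic class `C_i^{(e,q)} = α^i ⟨α^e⟩` of order `e` in `F_q`. -/
noncomputable def cyc {F : Type} [Field F] [Fintype F] (α : F) (e i : ℕ) : Finset F :=
  (Finset.range ((Fintype.card F - 1) / e)).image (fun j => α ^ i * (α ^ e) ^ j)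

section helpers

variable {β : Type*}

lemma range_val_map (J : ℕ) [NeZero J] (g : ℕ → β) :
    (Finset.range J).val.map g
      = (Finset.univ : Finset (ZMod J)).val.map (fun j => g j.val) := by
  have h1 : Finset.range J = (Finset.univ : Finset (ZMod J)).image ZMod.val := by
    ext v
    simp only [Finset.mem_range, Finset.mem_image, Finset.mem_univ, true_and]
    constructor
    · intro hv; exact ⟨(v : ZMod J), by rw [ZMod.val_cast_of_lt hv]⟩
    · rintro ⟨j, rfl⟩; exact ZMod.val_lt j
  rw [h1, Finset.image_val, Multiset.dedup_eq_self.2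
    (Multiset.Nodup.map (ZMod.val_injective J) Finset.univ.nodup), Multiset.map_map]
  rfl

lemma range_val_bind (J : ℕ) [NeZero J] (g : ℕ → Multiset β) :
    (Finset.range J).val.bind g
      = (Finset.univ : Finset (ZMod J)).val.bind (fun j => g j.val) := by
  rw [Multiset.bind, Multiset.bind, range_val_map]

lemma univ_val_map_perm {γ : Type*} [Fintype γ] (σ : Equiv.Perm γ) :
    Multiset.map (⇑σ) (Finset.univ : Finset γ).val = (Finset.univ : Finset γ).val := by
  have h := congrArg Finset.val (Finset.map_univ_equiv σ)
  rwa [Finset.map_val] at h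

end helpers

/-- The key exponent-multiset lemma in `ZMod n`. -/
lemma core (n e d : ℕ) (hn : 0 < n) (hee : e ∣ n) (hdd : d ∣ n)
    (he0 : 0 < e) (hd0 : 0 < d) :
    ((Finset.range (n / e)).val.bind (fun j => (Finset.range (n / d)).val.map
        (fun k => ((e * j + d * k : ℕ) : ZMod n))))
      = ((n / d) * Nat.gcd d e / e) •
          ((Finset.range (n / Nat.gcd d e)).val.map
            (fun s => ((Nat.gcd d e * s : ℕ) : ZMod n))) := by
  classical
  haveI : NeZero n := ⟨hn.ne'⟩
  set e' := Nat.gcd d e with he'def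
  have he'0 : 0 < e' := Nat.gcd_pos_of_pos_right d he0
  have he'e : e' ∣ e := Nat.gcd_dvd_right d e
  have he'd : e' ∣ d := Nat.gcd_dvd_left d e
  have he'n : e' ∣ n := he'e.trans hee
  set J := n / e with hJdef
  set K := n / d with hKdef
  have hJ0 : 0 < J := Nat.div_pos (Nat.le_of_dvd hn hee) he0
  have hK0 : 0 < K := Nat.div_pos (Nat.le_of_dvd hn hdd) hd0
  have hL0 : 0 < n / e' := Nat.div_pos (Nat.le_of_dvd hn he'n) he'0
  haveI : NeZero J := ⟨hJ0.ne'⟩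
  haveI : NeZero K := ⟨hK0.ne'⟩
  have heJ : e * J = n := Nat.mul_div_cancel' hee
  have hdK : d * K = n := Nat.mul_div_cancel' hdd
  have he'L : e' * (n / e') = n := Nat.mul_div_cancel' he'n
  -- the mod trick : cast (c * (x % (n/c))) = cast (c * x) when c ∣ n
  have modtrick : ∀ (c M : ℕ), c * M = n → ∀ x : ℕ,
      ((c * (x % M) : ℕ) : ZMod n) = ((c * x : ℕ) : ZMod n) := by
    intro c M hcM x
    have : (c * x) % n = c * (x % M) := by rw [← hcM, Nat.mul_mod_mul_left]
    rw [← this, ZMod.natCast_mod]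
  set f : ZMod J × ZMod K → ZMod n :=
    fun jk => ((e * jk.1.val + d * jk.2.val : ℕ) : ZMod n) with hfdef
  set A : Multiset (ZMod n) := (Finset.univ : Finset (ZMod J × ZMod K)).val.map f
    with hAdef
  set B : Multiset (ZMod n) :=
    (Finset.range (n / e')).val.map (fun s => ((e' * s : ℕ) : ZMod n)) with hBdef
  -- LHS = A
  have hLHS : ((Finset.range J).val.bind (fun j => (Finset.range K).val.map
      (fun k => ((e * j + d * k : ℕ) : ZMod n)))) = A := by
    rw [range_val_bind]
    have : ∀ j : ZMod J, (Finset.range K).val.map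
        (fun k => ((e * j.val + d * k : ℕ) : ZMod n))
        = (Finset.univ : Finset (ZMod K)).val.map (fun k => f (j, k)) := by
      intro j; rw [range_val_map]
    simp_rw [this]
    rw [hAdef, ← Finset.univ_product_univ, Finset.product_val]
    rw [show ((Finset.univ : Finset (ZMod J)).val ×ˢ (Finset.univ : Finset (ZMod K)).val)
        = (Finset.univ : Finset (ZMod J)).val.bind
            (fun a => (Finset.univ : Finset (ZMod K)).val.map (Prod.mk a)) from rfl,
      Multiset.map_bind]
    congr 1
    funext j
    rw [Multiset.map_map]
    rfl
  rw [hLHS]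
  -- additivity of the embeddings
  have iotaE : ∀ x y : ZMod J,
      ((e * (x + y).val : ℕ) : ZMod n) = ((e * x.val : ℕ) : ZMod n) + ((e * y.val : ℕ) : ZMod n) := by
    intro x y
    rw [ZMod.val_add, modtrick e J heJ, Nat.mul_add, Nat.cast_add]
  have iotaD : ∀ x y : ZMod K,
      ((d * (x + y).val : ℕ) : ZMod n) = ((d * x.val : ℕ) : ZMod n) + ((d * y.val : ℕ) : ZMod n) := by
    intro x y
    rw [ZMod.val_add, modtrick d K hdK, Nat.mul_add, Nat.cast_add]
  have iotaE1 : ((e * (1 : ZMod J).val : ℕ) : ZMod n) = (e : ZMod n) := by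
    have : (1 : ZMod J).val = 1 % J := ZMod.val_one_eq_one_mod J
    rw [this, modtrick e J heJ 1, Nat.mul_one]
  have iotaD1 : ((d * (1 : ZMod K).val : ℕ) : ZMod n) = (d : ZMod n) := by
    have : (1 : ZMod K).val = 1 % K := ZMod.val_one_eq_one_mod K
    rw [this, modtrick d K hdK 1, Nat.mul_one]
  -- translation invariance of A under + e and + d
  have invE : A.map (· + (e : ZMod n)) = A := by
    rw [hAdef, Multiset.map_map]
    have key : ((· + (e : ZMod n)) ∘ f)
        = f ∘ (Equiv.prodCongr (Equiv.addRight (1 : ZMod J)) (Equiv.refl (ZMod K))) := by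
      funext jk
      simp only [Function.comp_apply, Equiv.prodCongr_apply, Equiv.coe_addRight,
        Equiv.refl_apply, Prod.map, hfdef]
      rw [Nat.cast_add, Nat.cast_add, iotaE jk.1 1, iotaE1]
      ring
    rw [key, ← Multiset.map_map, univ_val_map_perm]
  have invD : A.map (· + (d : ZMod n)) = A := by
    rw [hAdef, Multiset.map_map]
    have key : ((· + (d : ZMod n)) ∘ f)
        = f ∘ (Equiv.prodCongr (Equiv.refl (ZMod J)) (Equiv.addRight (1 : ZMod K))) := by
      funext jk
      simp only [Function.comp_apply, Equiv.prodCongr_apply, Equiv.coe_addRight,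
        Equiv.refl_apply, Prod.map, hfdef]
      rw [Nat.cast_add, Nat.cast_add, iotaD jk.2 1, iotaD1]
      ring
    rw [key, ← Multiset.map_map, univ_val_map_perm]
  -- count invariance
  have cntOf : ∀ g : ZMod n, A.map (· + g) = A → ∀ z, A.count (z + g) = A.count z := by
    intro g hg z
    conv_lhs => rw [← hg]
    exact Multiset.count_map_eq_count' _ A (add_left_injective g) z
  set Q : ZMod n → Prop := fun g => ∀ z, A.count (z + g) = A.count z with hQdef
  have hQe : Q (e : ZMod n) := cntOf _ invE
  have hQd : Q (d : ZMod n) := cntOf _ invD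
  have hQadd : ∀ g h, Q g → Q h → Q (g + h) := by
    intro g h hQg hQh z
    rw [← add_assoc, hQh (z + g), hQg z]
  have hQzero : Q 0 := by intro z; rw [add_zero]
  have hQnsmul : ∀ (k : ℕ) (g), Q g → Q (k • g) := by
    intro k g hQg
    induction k with
    | zero => simpa using hQzero
    | succ k ih => rw [succ_nsmul]; exact hQadd _ _ ih hQg
  have hQmul : ∀ (c : ZMod n) (g), Q g → Q (c * g) := by
    intro c g hQg
    have : c * g = c.val • g := by
      rw [nsmul_eq_mul, ZMod.natCast_val, ZMod.cast_id]
    rw [this]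
    exact hQnsmul _ _ hQg
  -- Bezout : Q e'
  have hQe' : Q (e' : ZMod n) := by
    have hbez : (e' : ℤ) = d * Nat.gcdA d e + e * Nat.gcdB d e := Nat.gcd_eq_gcd_ab d e
    have : (e' : ZMod n) = ((Nat.gcdA d e : ℤ) : ZMod n) * (d : ZMod n)
        + ((Nat.gcdB d e : ℤ) : ZMod n) * (e : ZMod n) := by
      have := congrArg (fun t : ℤ => (t : ZMod n)) hbez
      push_cast at this
      rw [this]; ring
    rw [this]
    exact hQadd _ _ (hQmul _ _ hQd) (hQmul _ _ hQe)
  have hQmultiple : ∀ s : ℕ, Q ((e' * s : ℕ) : ZMod n) := by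
    intro s
    have : ((e' * s : ℕ) : ZMod n) = ((s : ZMod n)) * (e' : ZMod n) := by
      push_cast; ring
    rw [this]
    exact hQmul _ _ hQe'
  -- every element of A lies in B
  have hAB : ∀ z ∈ A, z ∈ B := by
    intro z hz
    rw [hAdef, Multiset.mem_map] at hz
    obtain ⟨jk, _, rfl⟩ := hz
    set t := (e / e') * jk.1.val + (d / e') * jk.2.val with htdef
    have ht : e * jk.1.val + d * jk.2.val = e' * t := by
      rw [htdef, Nat.mul_add, ← Nat.mul_assoc, ← Nat.mul_assoc,
        Nat.mul_div_cancel' he'e, Nat.mul_div_cancel' he'd]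
    rw [hBdef, Multiset.mem_map]
    refine ⟨t % (n / e'), ?_, ?_⟩
    · rw [← Finset.mem_def, Finset.mem_range]
      exact Nat.mod_lt _ hL0
    · show ((e' * (t % (n / e')) : ℕ) : ZMod n) = f jk
      rw [modtrick e' (n / e') he'L t, ← ht]
  -- B has no duplicates
  have hBnodup : B.Nodup := by
    rw [hBdef]
    refine Multiset.Nodup.map_on ?_ (Finset.range (n / e')).nodup
    intro x hx y hy hxy
    rw [← Finset.mem_def, Finset.mem_range] at hx hy
    have hx' : e' * x < n := by
      calc e' * x < e' * (n / e') := (Nat.mul_lt_mul_left he'0).2 hx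
      _ = n := he'L
    have hy' : e' * y < n := by
      calc e' * y < e' * (n / e') := (Nat.mul_lt_mul_left he'0).2 hy
      _ = n := he'L
    have heq : e' * x = e' * y := by
      have h1 := ZMod.val_cast_of_lt hx'
      have h2 := ZMod.val_cast_of_lt hy'
      rw [← h1, ← h2, hxy]
    exact Nat.eq_of_mul_eq_mul_left he'0 heq
  -- counts
  set c₀ := A.count 0 with hc₀
  have hcount : ∀ z, A.count z = c₀ * B.count z := by
    intro z
    by_cases hzB : z ∈ B
    · have h1 : B.count z = 1 := Multiset.count_eq_one_of_mem hBnodup hzB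
      rw [h1, Nat.mul_one]
      rw [hBdef, Multiset.mem_map] at hzB
      obtain ⟨s, _, rfl⟩ := hzB
      have := hQmultiple s 0
      rw [zero_add] at this
      rw [this, hc₀]
    · rw [Multiset.count_eq_zero_of_notMem hzB,
        Multiset.count_eq_zero_of_notMem (fun h => hzB (hAB z h)), Nat.mul_zero]
  have hAeq : A = c₀ • B := by
    ext z
    rw [Multiset.count_nsmul, hcount]
  -- cardinalities
  have hcardA : Multiset.card A = J * K := by
    rw [hAdef, Multiset.card_map, ← Finset.card_def, Finset.card_univ,
      Fintype.card_prod, ZMod.card, ZMod.card]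
  have hcardB : Multiset.card B = n / e' := by
    rw [hBdef, Multiset.card_map, ← Finset.card_def, Finset.card_range]
  have hcardEq : J * K = c₀ * (n / e') := by
    rw [← hcardA, hAeq, Multiset.card_nsmul, hcardB]
  -- arithmetic : the target coefficient
  have harith : (K * e' / e) * (n / e') = J * K := by
    obtain ⟨a, ha⟩ := he'e
    have ha0 : 0 < a := by
      rcases Nat.eq_zero_or_pos a with h | h
      · subst h; simp at ha; omega
      · exact h
    have hcop : Nat.Coprime (d / e') (e / e') := Nat.coprime_div_gcd_div_gcd he'0
    have hea : e / e' = a := by rw [ha, Nat.mul_div_cancel_left _ he'0]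
    have haK : a ∣ K := by
      have h1 : e ∣ d * K := by rw [hdK]; exact hee
      have h2 : (e' * a) ∣ (e' * (d / e')) * K := by
        rw [← ha, Nat.mul_div_cancel' he'd]; exact h1
      have h3 : a ∣ (d / e') * K := by
        rw [Nat.mul_assoc] at h2
        exact (Nat.mul_dvd_mul_iff_left he'0).1 h2
      exact (Nat.Coprime.dvd_of_dvd_mul_left (by rw [← hea]; exact hcop.symm) h3)
    obtain ⟨t, htK⟩ := haK
    obtain ⟨s, hns⟩ := hee
    have hKe' : K * e' / e = t := by
      rw [htK, ha]
      rw [show a * t * e' = t * (e' * a) by ring, Nat.mul_div_cancel _ (by positivity)]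
    have hJs : J = s := by rw [hJdef, hns, Nat.mul_div_cancel_left _ he0]
    have hne' : n / e' = a * s := by
      rw [hns, ha, show e' * a * s = e' * (a * s) by ring,
        Nat.mul_div_cancel_left _ he'0]
    rw [hKe', hne', hJs, htK]; ring
  have hc₀val : c₀ = K * e' / e := by
    have := hcardEq
    rw [← harith] at this
    exact (Nat.eq_of_mul_eq_mul_right hL0 this.symm)
  rw [hAeq, hc₀val]

/-- The multiset `{xy : y ∈ F_p^*, x ∈ C_i^{(e,q)}}` equals the multiset where each
element of `C_i^{(e',q)}`, `e' = gcd((q-1)/(p-1), e)`, appears with multiplicity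
`(p-1)e'/e`. -/
theorem stmt7 (p m e : ℕ) [Fact p.Prime]
    (F : Type) [Field F] [Fintype F] [Algebra (ZMod p) F]
    (hq : Fintype.card F = p ^ m)
    (α : F) (hα : orderOf α = p ^ m - 1)
    (he : e ∣ p ^ m - 1) (he0 : 0 < e)
    (i : ℕ) (hi : i < e) :
    ((cyc α e i).val.bind (fun x =>
        (Finset.univ : Finset (ZMod p)ˣ).val.map
          (fun y => x * algebraMap (ZMod p) F (y : ZMod p))))
      = ((p - 1) * Nat.gcd ((p ^ m - 1) / (p - 1)) e / e) •
          (cyc α (Nat.gcd ((p ^ m - 1) / (p - 1)) e) i).val := by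
  classical
  have hp1 : 1 < p := (Fact.out : p.Prime).one_lt
  set n := p ^ m - 1 with hndef
  have hcard2 : 1 < Fintype.card F := Fintype.one_lt_card
  have hpm : 1 < p ^ m := hq ▸ hcard2
  have hn : 0 < n := by omega
  haveI : NeZero n := ⟨hn.ne'⟩
  have hp1' : 0 < p - 1 := by omega
  have hdvd1 : p - 1 ∣ n := by
    have := Nat.sub_dvd_pow_sub_pow p 1 m
    simpa [hndef] using this
  set d := n / (p - 1) with hddef
  have hdd : d ∣ n := Nat.div_dvd_of_dvd hdvd1
  have hd0 : 0 < d := Nat.div_pos (Nat.le_of_dvd hn hdvd1) hp1'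
  have hKd : n / d = p - 1 := Nat.div_div_self hdvd1 hn.ne'
  set e' := Nat.gcd d e with he'def
  have he'e : e' ∣ e := Nat.gcd_dvd_right d e
  have he'n : e' ∣ n := he'e.trans he
  have he'0 : 0 < e' := Nat.gcd_pos_of_pos_right d he0
  -- powers of α
  have hαn : α ^ n = 1 := by rw [← hα]; exact pow_orderOf_eq_one α
  have hαu : IsUnit α := IsUnit.of_pow_eq_one hαn hn.ne'
  obtain ⟨u, hu⟩ := hαu
  have hou : orderOf u = n := by rw [← hα, ← hu, orderOf_units]
  have hdp : d * (p - 1) = n := by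
    rw [hddef, Nat.div_mul_cancel hdvd1]
  have hpow : ∀ a b : ℕ, (α ^ a = α ^ b ↔ a ≡ b [MOD n]) := by
    intro a b
    constructor
    · intro h
      have h2 : u ^ a = u ^ b := Units.ext (by
        rw [Units.val_pow_eq_pow_val, Units.val_pow_eq_pow_val, hu]; exact h)
      rwa [pow_eq_pow_iff_modEq, hou] at h2
    · intro h
      have h2 : u ^ a = u ^ b := by rwa [pow_eq_pow_iff_modEq, hou]
      calc α ^ a = ↑(u ^ a) := by rw [Units.val_pow_eq_pow_val, hu]
        _ = ↑(u ^ b) := by rw [h2]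
        _ = α ^ b := by rw [Units.val_pow_eq_pow_val, hu]
  -- the value of cyc
  have hcyc : ∀ ee : ℕ, ee ∣ n → 0 < ee →
      (cyc α ee i).val
        = (Finset.range (n / ee)).val.map (fun j => α ^ i * (α ^ ee) ^ j) := by
    intro ee heen hee0
    rw [cyc, hq, ← hndef, Finset.image_val, Multiset.dedup_eq_self.2]
    refine Multiset.Nodup.map_on ?_ (Finset.range _).nodup
    intro x hx y hy hxy
    rw [← Finset.mem_def, Finset.mem_range] at hx hy
    rw [← pow_mul, ← pow_mul, ← pow_add, ← pow_add, hpow] at hxy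
    have hxy' : ee * x ≡ ee * y [MOD n] := Nat.ModEq.add_left_cancel' i hxy
    have heeN : ee * (n / ee) = n := Nat.mul_div_cancel' heen
    have hx' : ee * x < n := heeN ▸ (Nat.mul_lt_mul_left hee0).2 hx
    have hy' : ee * y < n := heeN ▸ (Nat.mul_lt_mul_left hee0).2 hy
    have hxyeq : ee * x = ee * y := by
      unfold Nat.ModEq at hxy'
      rwa [Nat.mod_eq_of_lt hx', Nat.mod_eq_of_lt hy'] at hxy'
    exact Nat.eq_of_mul_eq_mul_left hee0 hxyeq
  -- the image of the units of ZMod p equals the powers of α ^ d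
  set algm : (ZMod p)ˣ → F := fun y => algebraMap (ZMod p) F (y : ZMod p) with halgm
  have hinj : Function.Injective algm := by
    intro a b hab
    exact Units.ext ((algebraMap (ZMod p) F).injective hab)
  have hcardS : (Polynomial.nthRootsFinset (p - 1) (1 : F)).card ≤ p - 1 := by
    calc (Polynomial.nthRootsFinset (p - 1) (1 : F)).card
        ≤ Multiset.card (Polynomial.nthRoots (p - 1) (1 : F)) := by
          rw [Polynomial.nthRootsFinset_def]; exact Multiset.toFinset_card_le _
      _ ≤ p - 1 := Polynomial.card_nthRoots _ _
  have hUS : Finset.univ.image algm = Polynomial.nthRootsFinset (p - 1) (1 : F) := by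
    apply Finset.eq_of_subset_of_card_le
    · intro z hz
      rw [Finset.mem_image] at hz
      obtain ⟨y, _, rfl⟩ := hz
      rw [Polynomial.mem_nthRootsFinset hp1', halgm]
      simp only
      rw [← map_pow]
      have hy1 : (y : ZMod p) ^ (p - 1) = 1 := by
        have h := ZMod.units_pow_card_sub_one_eq_one p y
        rw [← Units.val_pow_eq_pow_val, h, Units.val_one]
      rw [hy1, map_one]
    · calc (Polynomial.nthRootsFinset (p - 1) (1 : F)).card ≤ p - 1 := hcardS
        _ = (Finset.univ.image algm).card := by
          rw [Finset.card_image_of_injective _ hinj, Finset.card_univ,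
            ZMod.card_units_eq_totient, Nat.totient_prime Fact.out]
  have hVS : (Finset.range (p - 1)).image (fun k => (α ^ d) ^ k)
      = Polynomial.nthRootsFinset (p - 1) (1 : F) := by
    apply Finset.eq_of_subset_of_card_le
    · intro z hz
      rw [Finset.mem_image] at hz
      obtain ⟨k, _, rfl⟩ := hz
      rw [Polynomial.mem_nthRootsFinset hp1', ← pow_mul, ← pow_mul,
        show d * (k * (p - 1)) = n * k by rw [← hdp]; ring, pow_mul, hαn, one_pow]
    · calc (Polynomial.nthRootsFinset (p - 1) (1 : F)).card ≤ p - 1 := hcardS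
        _ = ((Finset.range (p - 1)).image (fun k => (α ^ d) ^ k)).card := by
          rw [Finset.card_image_of_injOn, Finset.card_range]
          intro x hx y hy hxy
          simp only at hxy
          rw [Finset.coe_range, Set.mem_Iio] at hx hy
          rw [← pow_mul, ← pow_mul, hpow] at hxy
          have hx' : d * x < n := by rw [← hdp]; exact (Nat.mul_lt_mul_left hd0).2 hx
          have hy' : d * y < n := by rw [← hdp]; exact (Nat.mul_lt_mul_left hd0).2 hy
          unfold Nat.ModEq at hxy
          rw [Nat.mod_eq_of_lt hx', Nat.mod_eq_of_lt hy'] at hxy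
          exact Nat.eq_of_mul_eq_mul_left hd0 hxy
  have hVnodup : Multiset.Nodup ((Finset.range (p - 1)).val.map
      (fun k => (α ^ d) ^ k)) := by
    refine Multiset.Nodup.map_on ?_ (Finset.range _).nodup
    intro x hx y hy hxy
    rw [← Finset.mem_def, Finset.mem_range] at hx hy
    rw [← pow_mul, ← pow_mul, hpow] at hxy
    have hx' : d * x < n := by rw [← hdp]; exact (Nat.mul_lt_mul_left hd0).2 hx
    have hy' : d * y < n := by rw [← hdp]; exact (Nat.mul_lt_mul_left hd0).2 hy
    unfold Nat.ModEq at hxy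
    rw [Nat.mod_eq_of_lt hx', Nat.mod_eq_of_lt hy'] at hxy
    exact Nat.eq_of_mul_eq_mul_left hd0 hxy
  have hUV : (Finset.univ : Finset (ZMod p)ˣ).val.map algm
      = (Finset.range (p - 1)).val.map (fun k => (α ^ d) ^ k) := by
    have h1 : (Finset.univ : Finset (ZMod p)ˣ).val.map algm
        = (Finset.univ.image algm).val := by
      rw [Finset.image_val,
        Multiset.dedup_eq_self.2 (Multiset.Nodup.map hinj Finset.univ.nodup)]
    have h2 : (Finset.range (p - 1)).val.map (fun k => (α ^ d) ^ k)
        = ((Finset.range (p - 1)).image (fun k => (α ^ d) ^ k)).val := by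
      rw [Finset.image_val, Multiset.dedup_eq_self.2 hVnodup]
    rw [h1, h2, hUS, hVS]
  -- reduction to the exponent multiset lemma
  have hstep1 : (cyc α e i).val.bind (fun x =>
        (Finset.univ : Finset (ZMod p)ˣ).val.map
          (fun y => x * algebraMap (ZMod p) F (y : ZMod p)))
      = (Finset.range (n / e)).val.bind (fun j => (Finset.range (n / d)).val.map
          (fun k => (α ^ i * (α ^ e) ^ j) * (α ^ d) ^ k)) := by
    have hconv : ∀ x : F, (Finset.univ : Finset (ZMod p)ˣ).val.map
          (fun y => x * algebraMap (ZMod p) F (y : ZMod p))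
        = (Finset.range (n / d)).val.map (fun k => x * (α ^ d) ^ k) := by
      intro x
      rw [hKd]
      show Multiset.map _ ((Finset.univ : Finset (ZMod p)ˣ).val.bind
          (fun a => {(a : ZMod p)})) = _
      rw [Multiset.bind_singleton, Multiset.map_map]
      have h1 : Multiset.map ((fun y : ZMod p => x * algebraMap (ZMod p) F y) ∘ (Units.val))
            (Finset.univ : Finset (ZMod p)ˣ).val
          = ((Finset.univ : Finset (ZMod p)ˣ).val.map algm).map (fun z => x * z) := by
        rw [Multiset.map_map]; rfl
      rw [h1, hUV, Multiset.map_map]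
      rfl
    rw [hcyc e he he0, Multiset.bind_map]
    refine Multiset.bind_congr (fun j _ => ?_)
    exact hconv _
  set ψ : ZMod n → F := fun t => α ^ i * α ^ t.val with hψdef
  have hψ : ∀ t : ℕ, ψ ((t : ZMod n)) = α ^ i * α ^ t := by
    intro t
    rw [hψdef]
    simp only
    congr 1
    rw [hpow, ZMod.val_natCast]
    exact Nat.mod_modEq t n
  have hmapL : (Finset.range (n / e)).val.bind (fun j => (Finset.range (n / d)).val.map
          (fun k => (α ^ i * (α ^ e) ^ j) * (α ^ d) ^ k))
      = Multiset.map ψ ((Finset.range (n / e)).val.bind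
          (fun j => (Finset.range (n / d)).val.map
            (fun k => ((e * j + d * k : ℕ) : ZMod n)))) := by
    rw [Multiset.map_bind]
    refine Multiset.bind_congr (fun j _ => ?_)
    rw [Multiset.map_map]
    refine Multiset.map_congr rfl (fun k _ => ?_)
    simp only [Function.comp_apply]
    rw [hψ, pow_add, pow_mul, pow_mul, mul_assoc]
  have hmapR : (cyc α e' i).val
      = Multiset.map ψ ((Finset.range (n / e')).val.map
          (fun s => ((e' * s : ℕ) : ZMod n))) := by
    rw [hcyc e' he'n he'0, Multiset.map_map]
    refine Multiset.map_congr rfl (fun s _ => ?_)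
    simp only [Function.comp_apply]
    rw [hψ, pow_mul]
  rw [hstep1, hmapL, hmapR, core n e d hn he hdd he0 hd0, hKd, Multiset.map_nsmul]
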